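/- If a (p, p, pr)-board is Cartesian magic for positive integers p and r, then r = 1. -/
import Mathlib


/-- If a `(p, p, pr)`-board is Cartesian magic, then `r = 1`. -/
theorem stmt10 (p r : ℕ) (hp : 0 < p) (hr : 0 < r) (m : ℕ)
    (e : ((Fin p × Fin p) ⊕ (Fin p × Fin (p * r)) ⊕ (Fin p × Fin (p * r))) ≃
      Fin (p * p + p * (p * r) + p * (p * r)))
    (PQ : Fin p → Fin p → ℕ) (PR : Fin p → Fin (p * r) → ℕ) (QR : Fin p → Fin (p * r) → ℕ)
    (hPQ : ∀ i j, PQ i j = (e (Sum.inl (i, j))).val + 1)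
    (hPR : ∀ i k, PR i k = (e (Sum.inr (Sum.inl (i, k)))).val + 1)
    (hQR : ∀ j k, QR j k = (e (Sum.inr (Sum.inr (j, k)))).val + 1)
    (hrow : ∀ i, (∑ j, PQ i j) + (∑ k, PR i k) = m)
    (hcol : ∀ j, (∑ i, PQ i j) + (∑ k, QR j k) = m)
    (hz : ∀ k, (∑ i, PR i k) + (∑ j, QR j k) = m) :
    r = 1 := by
  set a := ∑ i, ∑ j, PQ i j with ha
  set b := ∑ i, ∑ k, PR i k with hb
  set c := ∑ j, ∑ k, QR j k with hc
  have hA : a + b = p * m := by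
    rw [ha, hb, ← Finset.sum_add_distrib]
    simp [hrow]
  have hB : a + c = p * m := by
    have h1 : (∑ j, ∑ i, PQ i j) + c = p * m := by
      rw [hc, ← Finset.sum_add_distrib]; simp [hcol]
    rwa [Finset.sum_comm] at h1
  have hC : b + c = (p * r) * m := by
    rw [hb, hc, Finset.sum_comm (s := Finset.univ) (t := Finset.univ) (f := fun i k => PR i k),
      Finset.sum_comm (s := Finset.univ) (t := Finset.univ) (f := fun j k => QR j k),
      ← Finset.sum_add_distrib]
    simp [hz]
  have i0 : Fin p := ⟨0, hp⟩
  have ha1 : 1 ≤ a := by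
    calc 1 ≤ PQ i0 i0 := by rw [hPQ]; omega
    _ ≤ ∑ j, PQ i0 j :=
        Finset.single_le_sum (fun j _ => Nat.zero_le _) (Finset.mem_univ i0)
    _ ≤ a := Finset.single_le_sum (f := fun i => ∑ j, PQ i j) (fun i _ => Nat.zero_le _) (Finset.mem_univ i0)
  by_contra hne
  have hr2 : 2 ≤ r := by omega
  have hmul : 2 * (p * m) ≤ (p * r) * m := by
    have : p * 2 ≤ p * r := Nat.mul_le_mul_left p hr2
    calc 2 * (p * m) = (p * 2) * m := by ring
    _ ≤ (p * r) * m := Nat.mul_le_mul_right m this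
  generalize p * m = X at hA hB hmul
  generalize (p * r) * m = Y at hC hmul
  omega
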